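/- Let A be a prime nontrivial associative superalgebra over a commutative unital ring Φ with 1/2 ∈ Φ, and let L be a Lie ideal of A. Then C(L) = { x ∈ A : [x, L] = 0 } is both a graded subalgebra of A and a Lie ideal of A. -/
import Mathlib


/-! Basic notions for associative superalgebras (ℤ/2-graded algebras). -/

variable {Φ A : Type*} [CommRing Φ] [Ring A] [Algebra Φ A]
variable (𝒜 : ZMod 2 → Submodule Φ A) [GradedAlgebra 𝒜]

/-- The superbracket of elements of degrees `i` and `j`:
`[a,b] = a*b - (-1)^(|a||b|) b*a`. -/
def sbrak (i j : ZMod 2) (a b : A) : A :=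
  a * b - ((-1 : ℤ) ^ (i.val * j.val)) • (b * a)

/-- The bilinear extension of the superbracket to all of `A`, via the
homogeneous components. -/
def superComm (x y : A) : A :=
  ∑ i : ZMod 2, ∑ j : ZMod 2,
    sbrak i j (DirectSum.decompose 𝒜 x i : A) (DirectSum.decompose 𝒜 y j : A)

/-- A graded submodule: one containing all homogeneous components of its
elements. -/
def IsGradedSub (M : Submodule Φ A) : Prop :=
  ∀ (i : ZMod 2), ∀ x ∈ M, (DirectSum.decompose 𝒜 x i : A) ∈ M

/-- A graded two-sided ideal of the superalgebra `A`. -/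
def IsGradedIdeal (I : Submodule Φ A) : Prop :=
  IsGradedSub 𝒜 I ∧ ∀ (a : A), ∀ x ∈ I, a * x ∈ I ∧ x * a ∈ I

/-- `A` is a prime superalgebra: for graded ideals `I, J`, `IJ = 0` implies
`I = 0` or `J = 0`. -/
def SuperPrime : Prop :=
  ∀ I J : Submodule Φ A, IsGradedIdeal 𝒜 I → IsGradedIdeal 𝒜 J →
    (∀ x ∈ I, ∀ y ∈ J, x * y = 0) → I = ⊥ ∨ J = ⊥

/-- `A` is a semiprime superalgebra: for graded ideals `I`, `I² = 0` implies
`I = 0`. -/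
def SuperSemiprime : Prop :=
  ∀ I : Submodule Φ A, IsGradedIdeal 𝒜 I →
    (∀ x ∈ I, ∀ y ∈ I, x * y = 0) → I = ⊥

/-- `A` is a nontrivial superalgebra: its odd part is nonzero. -/
def SuperNontrivial : Prop := 𝒜 1 ≠ ⊥

/-- `Z`: the even part of the center of `A`. -/
def evenCenter : Set A := {z | z ∈ 𝒜 0 ∧ ∀ a : A, a * z = z * a}

/-- A Lie ideal of `A`: a graded submodule `L` with `[L, A] ⊆ L`
(superbracket). -/
def IsSuperLieIdeal (L : Submodule Φ A) : Prop :=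
  IsGradedSub 𝒜 L ∧ ∀ l ∈ L, ∀ a : A, superComm 𝒜 l a ∈ L

/-- A graded subalgebra of `A`: a graded submodule closed under
multiplication. -/
def IsGradedSubalg (W : Submodule Φ A) : Prop :=
  IsGradedSub 𝒜 W ∧ ∀ x ∈ W, ∀ y ∈ W, x * y ∈ W

/-- A submodule `M` is dense in `A` if the (non-unital) subalgebra generated
by `M` contains a nonzero graded ideal of `A`. -/
def SuperDense (M : Submodule Φ A) : Prop :=
  ∃ I : Submodule Φ A, IsGradedIdeal 𝒜 I ∧ I ≠ ⊥ ∧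
    ∀ x ∈ I, x ∈ NonUnitalAlgebra.adjoin Φ (M : Set A)

/-- Witness that `A` is a central order in the Clifford superalgebra of a
nondegenerate quadratic space of dimension `n` over the field `Z⁻¹Z`:
an embedding `f` of `A` into such a Clifford superalgebra, preserving the
grading, inverting the nonzero elements of `Z`, and such that every element of
the Clifford superalgebra (resp. of its base field) is a fraction of elements
of `A` (resp. of `Z`) over `Z`. -/
structure CentralOrderInCliffWitness (n : ℕ) : Type _ where
  K : Type
  [fieldK : Field K]
  V : Type
  [acgV : AddCommGroup V]
  [modV : Module K V]
  Q : QuadraticForm K V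
  dim : Module.finrank K V = n
  nondeg : LinearMap.BilinForm.Nondegenerate (QuadraticMap.polarBilin Q)
  f : A →+* CliffordAlgebra Q
  inj : Function.Injective f
  graded : ∀ i : ZMod 2, ∀ x ∈ 𝒜 i, f x ∈ CliffordAlgebra.evenOdd Q i
  unitZ : ∀ z ∈ evenCenter 𝒜, z ≠ 0 → IsUnit (f z)
  centralZ : ∀ z ∈ evenCenter 𝒜, ∀ c : CliffordAlgebra Q, c * f z = f z * c
  fracSurj : ∀ (i : ZMod 2), ∀ c ∈ CliffordAlgebra.evenOdd Q i,
    ∃ z ∈ evenCenter 𝒜, z ≠ 0 ∧ ∃ a ∈ 𝒜 i, f z * c = f a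
  baseField : ∀ k : K, ∃ z ∈ evenCenter 𝒜, z ≠ 0 ∧ ∃ w ∈ evenCenter 𝒜,
    algebraMap K (CliffordAlgebra Q) k * f z = f w

/-- `A` is a central order in `C(n)`. -/
def IsCentralOrderInCliff (n : ℕ) : Prop :=
  (∃ z ∈ evenCenter 𝒜, z ≠ 0) ∧ Nonempty (CentralOrderInCliffWitness 𝒜 n)

/-! ### Auxiliary lemmas -/

theorem aux_zmodsum {M : Type*} [AddCommMonoid M] (f : ZMod 2 → M) :
    ∑ i : ZMod 2, f i = f 0 + f 1 := Fin.sum_univ_two f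

theorem aux_sum_decompose (x : A) :
    (DirectSum.decompose 𝒜 x 0 : A) + (DirectSum.decompose 𝒜 x 1 : A) = x := by
  classical
  have h := DirectSum.sum_support_decompose 𝒜 x
  have h2 : ∑ i ∈ (DirectSum.decompose 𝒜 x).support, (DirectSum.decompose 𝒜 x i : A)
      = ∑ i : ZMod 2, (DirectSum.decompose 𝒜 x i : A) := by
    refine Finset.sum_subset (Finset.subset_univ _) ?_
    intro i _ hi
    simp [DFinsupp.notMem_support_iff.mp hi]
  rw [h2, aux_zmodsum] at h
  exact h

theorem aux_sbrak_add_left (i j : ZMod 2) (a a' b : A) :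
    sbrak i j (a+a') b = sbrak i j a b + sbrak i j a' b := by
  simp only [sbrak, add_mul, mul_add, smul_add]; abel

theorem aux_sbrak_add_right (i j : ZMod 2) (a b b' : A) :
    sbrak i j a (b+b') = sbrak i j a b + sbrak i j a b' := by
  simp only [sbrak, add_mul, mul_add, smul_add]; abel

theorem aux_sbrak_smul_left (i j : ZMod 2) (r : Φ) (a b : A) :
    sbrak i j (r • a) b = r • sbrak i j a b := by
  simp only [sbrak, smul_mul_assoc, mul_smul_comm, smul_sub,
    smul_comm ((-1:ℤ)^(i.val*j.val)) r]

theorem aux_sbrak_zero_left (i j : ZMod 2) (b : A) : sbrak i j 0 b = 0 := by simp [sbrak]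

theorem aux_decompose_smul (r : Φ) (x : A) (i : ZMod 2) :
    (DirectSum.decompose 𝒜 (r • x) i : A) = r • (DirectSum.decompose 𝒜 x i : A) := by
  rw [DirectSum.decompose_smul]; rfl

theorem aux_superComm_add_left (x x' y : A) :
    superComm 𝒜 (x+x') y = superComm 𝒜 x y + superComm 𝒜 x' y := by
  simp [superComm, DirectSum.decompose_add, aux_sbrak_add_left, Finset.sum_add_distrib]

theorem aux_superComm_add_right (x y y' : A) :
    superComm 𝒜 x (y+y') = superComm 𝒜 x y + superComm 𝒜 x y' := by
  simp [superComm, DirectSum.decompose_add, aux_sbrak_add_right, Finset.sum_add_distrib]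

theorem aux_superComm_smul_left (r : Φ) (x y : A) :
    superComm 𝒜 (r • x) y = r • superComm 𝒜 x y := by
  unfold superComm
  simp only [aux_decompose_smul, aux_sbrak_smul_left, ← Finset.smul_sum]

theorem aux_superComm_zero_left (y : A) : superComm 𝒜 0 y = 0 := by
  simp [superComm, aux_sbrak_zero_left]

theorem aux_sbrak_mem {a b : A} {i j : ZMod 2} (ha : a ∈ 𝒜 i) (hb : b ∈ 𝒜 j) :
    sbrak i j a b ∈ 𝒜 (i+j) := by
  refine Submodule.sub_mem _ (SetLike.mul_mem_graded ha hb) (zsmul_mem ?_ _)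
  simpa [add_comm] using SetLike.mul_mem_graded hb ha

theorem aux_superComm_of_mem {x y : A} {i j : ZMod 2} (hx : x ∈ 𝒜 i) (hy : y ∈ 𝒜 j) :
    superComm 𝒜 x y = sbrak i j x y := by
  unfold superComm
  rw [Finset.sum_eq_single i, Finset.sum_eq_single j]
  · rw [DirectSum.decompose_of_mem_same 𝒜 hx, DirectSum.decompose_of_mem_same 𝒜 hy]
  · intro b _ hbj
    rw [DirectSum.decompose_of_mem_ne 𝒜 hy (Ne.symm hbj)]; simp [sbrak]
  · simp
  · intro b _ hbi
    rw [DirectSum.decompose_of_mem_ne 𝒜 hx (Ne.symm hbi)]; simp [sbrak]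
  · simp

theorem aux_superComm_right_of_mem {l : A} {j : ZMod 2} (hl : l ∈ 𝒜 j) (x : A) :
    superComm 𝒜 x l = sbrak 0 j (DirectSum.decompose 𝒜 x 0 : A) l
      + sbrak 1 j (DirectSum.decompose 𝒜 x 1 : A) l := by
  unfold superComm
  rw [aux_zmodsum]
  congr 1 <;>
  · rw [Finset.sum_eq_single j]
    · rw [DirectSum.decompose_of_mem_same 𝒜 hl]
    · intro b _ hbj
      rw [DirectSum.decompose_of_mem_ne 𝒜 hl (Ne.symm hbj)]
      simp [sbrak]
    · simp

theorem aux_graded_cancel {u v : A} {s t : ZMod 2} (hu : u ∈ 𝒜 s) (hv : v ∈ 𝒜 t)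
    (hst : s ≠ t) (h : u + v = 0) : u = 0 := by
  have h1 : (DirectSum.decompose 𝒜 (u+v) s : A) = u := by
    rw [DirectSum.decompose_add]
    simp [DirectSum.decompose_of_mem_same 𝒜 hu, DirectSum.decompose_of_mem_ne 𝒜 hv (Ne.symm hst)]
  rw [h] at h1; simpa using h1.symm

theorem aux_sign_add (i k j : ZMod 2) :
    ((-1:ℤ)^((i+k).val * j.val)) = ((-1:ℤ)^(i.val*j.val)) * ((-1:ℤ)^(k.val*j.val)) := by
  revert i k j; decide

theorem aux_sign_add' (i p j : ZMod 2) :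
    ((-1:ℤ)^(i.val * (p+j).val)) = ((-1:ℤ)^(i.val*p.val)) * ((-1:ℤ)^(i.val*j.val)) := by
  revert i p j; decide

theorem aux_sbrak_mul {i k j : ZMod 2} {u v l : A}
    (hu : sbrak i j u l = 0) (hv : sbrak k j v l = 0) :
    sbrak (i+k) j (u*v) l = 0 := by
  have hu' := sub_eq_zero.mp hu
  have hv' := sub_eq_zero.mp hv
  show u*v*l - _ • (l*(u*v)) = 0
  rw [aux_sign_add]
  linear_combination (norm := (noncomm_ring; module)) u * hv' + ((-1:ℤ)^(k.val*j.val)) • (hu' * v)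

theorem aux_key {A : Type*} [Ring A] {α β δ : ℤ} {x a l : A} (h1 : x*l = α • (l*x))
    (h2 : x*(a*l - β•(l*a)) = (δ*α) • ((a*l - β•(l*a))*x)) :
    (x*a - δ•(a*x))*l - (α*β) • (l*(x*a - δ•(a*x))) = 0 := by
  linear_combination (norm := (noncomm_ring; module)) h2 + β • h1 * a - δ • (a * h1)

/-- Characterization of super-centralizing via homogeneous components. -/
theorem aux_mem_char {L : Submodule Φ A} (hLg : IsGradedSub 𝒜 L) (x : A) :
    (∀ l ∈ L, superComm 𝒜 x l = 0) ↔
    ∀ (i j : ZMod 2), ∀ l ∈ L, l ∈ 𝒜 j →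
      sbrak i j (DirectSum.decompose 𝒜 x i : A) l = 0 := by
  constructor
  · intro h i j l hl hlj
    have h0 := h l hl
    rw [aux_superComm_right_of_mem 𝒜 hlj] at h0
    have t0 : sbrak 0 j (DirectSum.decompose 𝒜 x 0 : A) l ∈ 𝒜 (0+j) :=
      aux_sbrak_mem 𝒜 (SetLike.coe_mem _) hlj
    have t1 : sbrak 1 j (DirectSum.decompose 𝒜 x 1 : A) l ∈ 𝒜 (1+j) :=
      aux_sbrak_mem 𝒜 (SetLike.coe_mem _) hlj
    have hne : ∀ j' : ZMod 2, (0+j' : ZMod 2) ≠ 1+j' := by decide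
    have e0 := aux_graded_cancel 𝒜 t0 t1 (hne j) h0
    have e1 := aux_graded_cancel 𝒜 t1 t0 (Ne.symm (hne j)) (by rw [add_comm]; exact h0)
    rcases (by decide : ∀ m : ZMod 2, m = 0 ∨ m = 1) i with rfl | rfl
    · exact e0
    · exact e1
  · intro h l hl
    unfold superComm
    refine Finset.sum_eq_zero fun i _ => Finset.sum_eq_zero fun j _ => ?_
    exact h i j _ (hLg j l hl) (SetLike.coe_mem _)

theorem aux_right_reduce {L : Submodule Φ A} (hLg : IsGradedSub 𝒜 L) (x : A)
    (h : ∀ j : ZMod 2, ∀ l ∈ L, l ∈ 𝒜 j → superComm 𝒜 x l = 0) :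
    ∀ l ∈ L, superComm 𝒜 x l = 0 := by
  intro l hl
  rw [← aux_sum_decompose 𝒜 l, aux_superComm_add_right,
    h 0 _ (hLg 0 l hl) (SetLike.coe_mem _), h 1 _ (hLg 1 l hl) (SetLike.coe_mem _), add_zero]

theorem centralizer_isGradedSubalg_and_lieIdeal
    (h2 : IsUnit (2 : Φ)) (hp : SuperPrime 𝒜) (hnt : SuperNontrivial 𝒜)
    (L : Submodule Φ A) (hL : IsSuperLieIdeal 𝒜 L) :
    ∃ C : Submodule Φ A,
      (C : Set A) = {x : A | ∀ l ∈ L, superComm 𝒜 x l = 0} ∧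
      IsGradedSubalg 𝒜 C ∧ IsSuperLieIdeal 𝒜 C := by
  classical
  obtain ⟨hLg, hLie⟩ := hL
  set C : Submodule Φ A :=
    { carrier := {x : A | ∀ l ∈ L, superComm 𝒜 x l = 0}
      add_mem' := fun {x y} hx hy l hl => by
        rw [aux_superComm_add_left, hx l hl, hy l hl, add_zero]
      zero_mem' := fun l hl => aux_superComm_zero_left 𝒜 l
      smul_mem' := fun r x hx l hl => by
        rw [aux_superComm_smul_left, hx l hl, smul_zero] } with hC
  have memC : ∀ x : A, x ∈ C ↔ ∀ l ∈ L, superComm 𝒜 x l = 0 := fun x => Iff.rfl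
  -- C is a graded submodule
  have hCg : IsGradedSub 𝒜 C := by
    intro i x hx
    rw [memC]
    rw [aux_mem_char 𝒜 hLg]
    intro i' j l hl hlj
    by_cases hii : i' = i
    · subst hii
      rw [DirectSum.decompose_of_mem_same 𝒜 (SetLike.coe_mem _)]
      exact (aux_mem_char 𝒜 hLg x).mp ((memC x).mp hx) i' j l hl hlj
    · rw [DirectSum.decompose_of_mem_ne 𝒜 (SetLike.coe_mem _) fun hh => hii hh.symm]
      exact aux_sbrak_zero_left i' j l
  refine ⟨C, rfl, ⟨hCg, ?_⟩, hCg, ?_⟩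
  · -- closed under multiplication
    intro x hx y hy
    have hx' := (aux_mem_char 𝒜 hLg x).mp ((memC x).mp hx)
    have hy' := (aux_mem_char 𝒜 hLg y).mp ((memC y).mp hy)
    have hterm : ∀ i k : ZMod 2,
        (DirectSum.decompose 𝒜 x i : A) * (DirectSum.decompose 𝒜 y k : A) ∈ C := by
      intro i k
      rw [memC]
      refine aux_right_reduce 𝒜 hLg _ ?_
      intro j l hl hlj
      rw [aux_superComm_of_mem 𝒜
        (SetLike.mul_mem_graded (SetLike.coe_mem _) (SetLike.coe_mem _)) hlj]
      exact aux_sbrak_mul (hx' i j l hl hlj) (hy' k j l hl hlj)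
    have ex := aux_sum_decompose 𝒜 x
    have ey := aux_sum_decompose 𝒜 y
    rw [← ex, ← ey, add_mul, mul_add, mul_add]
    exact add_mem (add_mem (hterm 0 0) (hterm 0 1)) (add_mem (hterm 1 0) (hterm 1 1))
  · -- Lie ideal
    intro x hx a
    show (∑ i : ZMod 2, ∑ p : ZMod 2,
      sbrak i p (DirectSum.decompose 𝒜 x i : A) (DirectSum.decompose 𝒜 a p : A)) ∈ C
    refine Submodule.sum_mem _ fun i _ => Submodule.sum_mem _ fun p _ => ?_
    set u : A := (DirectSum.decompose 𝒜 x i : A) with hu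
    set b : A := (DirectSum.decompose 𝒜 a p : A) with hb
    have hu𝒜 : u ∈ 𝒜 i := SetLike.coe_mem _
    have hb𝒜 : b ∈ 𝒜 p := SetLike.coe_mem _
    have huC : ∀ l ∈ L, superComm 𝒜 u l = 0 := (memC _).mp (hCg i x hx)
    rw [memC]
    refine aux_right_reduce 𝒜 hLg _ ?_
    intro j l hl hlj
    rw [aux_superComm_of_mem 𝒜 (aux_sbrak_mem 𝒜 hu𝒜 hb𝒜) hlj]
    -- h1 : u*l = α • (l*u)
    have h1 : u * l = ((-1:ℤ)^(i.val*j.val)) • (l * u) := by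
      refine sub_eq_zero.mp ?_
      show sbrak i j u l = 0
      rw [← aux_superComm_of_mem 𝒜 hu𝒜 hlj]
      exact huC l hl
    -- w = sbrak p j b l lies in L and in 𝒜 (p+j)
    have hββ : ((-1:ℤ)^(p.val*j.val)) * ((-1:ℤ)^(p.val*j.val)) = 1 := by
      rw [← pow_add]
      exact Even.neg_one_pow ⟨p.val*j.val, rfl⟩
    have hw : sbrak p j b l = (-((-1:ℤ)^(p.val*j.val))) • superComm 𝒜 l b := by
      rw [aux_superComm_of_mem 𝒜 hlj hb𝒜]
      show b*l - ((-1:ℤ)^(p.val*j.val))•(l*b)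
        = (-((-1:ℤ)^(p.val*j.val))) • (l*b - ((-1:ℤ)^(j.val*p.val))•(b*l))
      rw [mul_comm j.val p.val, neg_smul, smul_sub, smul_smul, hββ, one_smul, neg_sub]
    have hwL : sbrak p j b l ∈ L := by
      rw [hw]
      exact zsmul_mem (hLie l hl b) _
    have hw𝒜 : sbrak p j b l ∈ 𝒜 (p+j) := aux_sbrak_mem 𝒜 hb𝒜 hlj
    have h2' : sbrak i (p+j) u (sbrak p j b l) = 0 := by
      rw [← aux_superComm_of_mem 𝒜 hu𝒜 hw𝒜]
      exact huC _ hwL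
    have h2 := sub_eq_zero.mp h2'
    rw [aux_sign_add'] at h2
    show sbrak i p u b * l
      - ((-1:ℤ)^((i+p).val*j.val)) • (l * sbrak i p u b) = 0
    rw [aux_sign_add i p j]
    exact aux_key h1 h2
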